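/- The Hermite functions are eigenfunctions of the Fourier transform with eigenvalue i^m: for every m ∈ ℕ and every y ∈ ℝ, ∫_ℝ e^{i x y} ψ_m(x) dx = √(2π) · i^m · ψ_m(y), where the integral is of the complex-valued function x ↦ e^{i x y} ψ_m(x). -/

import Mathlib

open MeasureTheory Polynomial
open scoped FourierTransform Real

/-- The `m`-th physicist's Hermite polynomial as a function,
`H_m(x) = (-1)^m e^{x²} (dᵐ/dxᵐ) e^{-x²}`. -/
noncomputable def physHermite (m : ℕ) (x : ℝ) : ℝ :=
  (-1 : ℝ) ^ m * Real.exp (x ^ 2) * iteratedDeriv m (fun t : ℝ => Real.exp (-t ^ 2)) x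

/-- The `m`-th Hermite function `ψ_m(x) = (2^m m! √π)^{-1/2} e^{-x²/2} H_m(x)`. -/
noncomputable def hermiteFun (m : ℕ) (x : ℝ) : ℝ :=
  ((2 : ℝ) ^ m * (Nat.factorial m : ℝ) * Real.sqrt Real.pi) ^ (-(1 : ℝ) / 2) *
    Real.exp (-x ^ 2 / 2) * physHermite m x

noncomputable section

/-- Auxiliary: physicist's Hermite polynomials via recursion. -/
noncomputable def hermP : ℕ → Polynomial ℝ
  | 0 => 1
  | (m+1) => 2 * Polynomial.X * hermP m - Polynomial.derivative (hermP m)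

/-- Auxiliary: gaussian times polynomial. -/
def gfun (p : Polynomial ℝ) (x : ℝ) : ℝ := Real.exp (-x ^ 2 / 2) * p.eval x

lemma integrable_pow_gauss (n : ℕ) :
    Integrable (fun x : ℝ => x ^ n * Real.exp (-(1/2) * x ^ 2)) := by
  have h := integrable_rpow_mul_exp_neg_mul_sq (b := 1/2) (by norm_num)
      (s := (n : ℝ)) (lt_of_lt_of_le (by norm_num) (Nat.cast_nonneg n))
  simpa [Real.rpow_natCast] using h

lemma integrable_gfun (p : Polynomial ℝ) : Integrable (gfun p) := by
  induction p using Polynomial.induction_on' with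
  | add p q hp hq =>
      have := hp.add hq
      apply this.congr
      filter_upwards with x
      simp [gfun, mul_add]
  | monomial n a =>
      have := (integrable_pow_gauss n).const_mul a
      apply this.congr
      filter_upwards with x
      simp only [gfun, Polynomial.eval_monomial]
      rw [show -x ^ 2 / 2 = -(1/2) * x ^ 2 by ring]
      ring

lemma hasDerivAt_gfun (p : Polynomial ℝ) (x : ℝ) :
    HasDerivAt (gfun p) (gfun (Polynomial.derivative p - Polynomial.X * p) x) x := by
  have h0 : HasDerivAt (fun x : ℝ => -x ^ 2 / 2) (-x) x := by
    convert ((hasDerivAt_pow 2 x).fun_neg.div_const 2) using 1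
    · rfl
    · rfl
    ring
  have h1 : HasDerivAt (fun x : ℝ => Real.exp (-x ^ 2 / 2))
      (-x * Real.exp (-x ^ 2 / 2)) x := by
    simpa [mul_comm] using h0.exp
  have h2 := (h1.mul (p.hasDerivAt x))
  have : gfun (Polynomial.derivative p - Polynomial.X * p) x
      = -x * Real.exp (-x ^ 2 / 2) * p.eval x
        + Real.exp (-x ^ 2 / 2) * (Polynomial.derivative p).eval x := by
    simp [gfun]; ring
  rw [this]
  exact h2

lemma gfun_X_mul (p : Polynomial ℝ) (x : ℝ) :
    gfun (Polynomial.X * p) x = x * gfun p x := by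
  simp [gfun]; ring

lemma iteratedDeriv_gauss (m : ℕ) :
    iteratedDeriv m (fun t : ℝ => Real.exp (-t ^ 2))
      = fun x => (-1 : ℝ) ^ m * (hermP m).eval x * Real.exp (-x ^ 2) := by
  induction m with
  | zero => simp [hermP]
  | succ n ih =>
      rw [iteratedDeriv_succ, ih]
      funext x
      have h0 : HasDerivAt (fun x : ℝ => -x ^ 2) (-(2 * x)) x := by
        simpa using (hasDerivAt_pow 2 x).fun_neg
      have h1 : HasDerivAt (fun x : ℝ => Real.exp (-x ^ 2))
          (-(2 * x) * Real.exp (-x ^ 2)) x := by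
        simpa [mul_comm] using h0.exp
      have h2 := (((hermP n).hasDerivAt x).fun_mul h1).const_mul ((-1 : ℝ) ^ n)
      have h3 := h2.deriv
      have : (fun x : ℝ => (-1 : ℝ) ^ n * (hermP n).eval x * Real.exp (-x ^ 2))
          = fun x : ℝ => (-1 : ℝ) ^ n * ((hermP n).eval x * Real.exp (-x ^ 2)) := by
        funext t; ring
      rw [this, h3]
      show (-1:ℝ)^n * ((Polynomial.derivative (hermP n)).eval x * Real.exp (-x^2)
          + (hermP n).eval x * (-(2*x) * Real.exp (-x^2)))
        = (-1:ℝ)^(n+1) * (hermP (n+1)).eval x * Real.exp (-x^2)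
      simp only [hermP, Polynomial.eval_sub, Polynomial.eval_mul, Polynomial.eval_ofNat,
        Polynomial.eval_X]
      ring

lemma physHermite_eq (m : ℕ) (x : ℝ) : physHermite m x = (hermP m).eval x := by
  unfold physHermite
  rw [iteratedDeriv_gauss]
  have h1 : Real.exp (x ^ 2) * Real.exp (-x ^ 2) = 1 := by
    rw [← Real.exp_add]; simp
  have h2 : ((-1 : ℝ) ^ m) * ((-1 : ℝ) ^ m) = 1 := by
    rw [← pow_add, Even.neg_one_pow ⟨m, by ring⟩]
  calc (-1:ℝ)^m * Real.exp (x^2) * ((-1:ℝ)^m * (hermP m).eval x * Real.exp (-x^2))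
      = ((-1:ℝ)^m * (-1:ℝ)^m) * (Real.exp (x^2) * Real.exp (-x^2)) * (hermP m).eval x := by ring
    _ = (hermP m).eval x := by rw [h1, h2]; ring

lemma T_eq (f : ℝ → ℂ) (y : ℝ) :
    ∫ x : ℝ, Complex.exp (Complex.I * x * y) * f x = 𝓕 f (-(y / (2 * π))) := by
  rw [Real.fourier_eq']
  congr 1
  funext v
  rw [smul_eq_mul]
  congr 2
  have hπ : (π : ℝ) ≠ 0 := Real.pi_ne_zero
  have : (-2 : ℝ) * π * (inner ℝ v (-(y / (2 * π))) : ℝ) = v * y := by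
    simp only [RCLike.inner_apply, conj_trivial]
    field_simp
  rw [this]
  push_cast
  ring

lemma hasDerivAt_T {f : ℝ → ℂ} (hf : Integrable f)
    (hxf : Integrable fun x : ℝ => x • f x) (y : ℝ) :
    HasDerivAt (fun y : ℝ => ∫ x : ℝ, Complex.exp (Complex.I * x * y) * f x)
      (Complex.I * ∫ x : ℝ, Complex.exp (Complex.I * x * y) * ((x : ℂ) * f x)) y := by
  have hπ : (π : ℝ) ≠ 0 := Real.pi_ne_zero
  have h := Real.hasDerivAt_fourier hf hxf (-(y / (2 * π)))
  have hc : HasDerivAt (fun y : ℝ => -(y / (2 * π))) (-(1 / (2 * π))) y := by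
    simpa using ((hasDerivAt_id y).div_const (2 * π)).fun_neg
  have h2 := h.scomp y hc
  have hfun : (fun y : ℝ => 𝓕 f (-(y / (2 * π))))
      = fun y : ℝ => ∫ x : ℝ, Complex.exp (Complex.I * x * y) * f x := by
    funext z; rw [T_eq]
  rw [Function.comp_def, hfun] at h2
  convert h2 using 1
  · rfl
  rw [← T_eq]
  have : ∀ x : ℝ, Complex.exp (Complex.I * x * y) * ((-2 * π * Complex.I * x) • f x)
      = (-2 * π * Complex.I) * (Complex.exp (Complex.I * x * y) * ((x : ℂ) * f x)) := by
    intro x; rw [smul_eq_mul]; ring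
  simp_rw [this, integral_const_mul, Complex.real_smul]
  set A := ∫ (x : ℝ), Complex.exp (Complex.I * ↑x * ↑y) * ((x : ℂ) * f x) with hA
  have hπc : (π : ℂ) ≠ 0 := Complex.ofReal_ne_zero.mpr hπ
  push_cast
  field_simp

lemma T_deriv {f : ℝ → ℂ} (hf : Integrable f) (h'f : Differentiable ℝ f)
    (hf' : Integrable (deriv f)) (y : ℝ) :
    ∫ x : ℝ, Complex.exp (Complex.I * x * y) * deriv f x
      = (-Complex.I * y) * ∫ x : ℝ, Complex.exp (Complex.I * x * y) * f x := by
  have hπ : (π : ℝ) ≠ 0 := Real.pi_ne_zero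
  have h := Real.fourier_deriv hf h'f hf'
  rw [T_eq, T_eq, h]
  simp only [smul_eq_mul]
  have hπc : (π : ℂ) ≠ 0 := Complex.ofReal_ne_zero.mpr hπ
  push_cast
  field_simp

lemma hasDerivAt_gc (p : Polynomial ℝ) (x : ℝ) :
    HasDerivAt (fun x : ℝ => ((gfun p x : ℝ) : ℂ))
      ((gfun (Polynomial.derivative p - Polynomial.X * p) x : ℝ) : ℂ) x :=
  (hasDerivAt_gfun p x).ofReal_comp

lemma integrable_kernel_mul {g : ℝ → ℂ} (hg : Integrable g) (y : ℝ) :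
    Integrable fun x : ℝ => Complex.exp (Complex.I * x * y) * g x := by
  have hmeas : AEStronglyMeasurable (fun x : ℝ => Complex.exp (Complex.I * x * y)) volume := by
    apply Continuous.aestronglyMeasurable
    continuity
  have hbd : ∀ x : ℝ, ‖Complex.exp (Complex.I * (x : ℂ) * (y : ℂ))‖ ≤ 1 := by
    intro x
    rw [Complex.norm_exp]
    simp [Complex.mul_re]
  have h := hg.bdd_mul hmeas (Filter.Eventually.of_forall hbd)
  simpa using h

lemma key (m : ℕ) (y : ℝ) :
    ∫ x : ℝ, Complex.exp (Complex.I * x * y) * ((gfun (hermP m) x : ℝ) : ℂ)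
      = ((Real.sqrt (2 * π) : ℝ) : ℂ) * Complex.I ^ m * ((gfun (hermP m) y : ℝ) : ℂ) := by
  induction m generalizing y with
  | zero =>
      have h := fourierIntegral_gaussian (b := (1/2 : ℂ)) (by norm_num) (y : ℂ)
      have h1 : ∀ x : ℝ, Complex.exp (Complex.I * x * y) * ((gfun (hermP 0) x : ℝ) : ℂ)
          = Complex.exp (Complex.I * y * x) * Complex.exp (-(1/2 : ℂ) * (x : ℂ) ^ 2) := by
        intro x
        rw [show gfun (hermP 0) x = Real.exp (-x ^ 2 / 2) by simp [gfun, hermP]]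
        rw [Complex.ofReal_exp]
        push_cast
        rw [← Complex.exp_add, ← Complex.exp_add]
        ring_nf
      simp_rw [h1]
      rw [h]
      have h2 : ((π : ℂ) / (1/2)) ^ (1/2 : ℂ) = ((Real.sqrt (2 * π) : ℝ) : ℂ) := by
        rw [show ((π : ℂ) / (1/2)) = ((2 * π : ℝ) : ℂ) by push_cast; ring,
          Real.sqrt_eq_rpow, Complex.ofReal_cpow (by positivity)]
        norm_num
      rw [h2]
      have h3 : Complex.exp (-(y : ℂ) ^ 2 / (4 * (1/2)))
          = ((gfun (hermP 0) y : ℝ) : ℂ) := by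
        rw [show gfun (hermP 0) y = Real.exp (-y ^ 2 / 2) by simp [gfun, hermP]]
        rw [Complex.ofReal_exp]
        push_cast
        ring_nf
      rw [h3]
      ring
  | succ n ih =>
      set p := hermP n with hp
      set q := Polynomial.derivative p - Polynomial.X * p with hq
      set C := ((Real.sqrt (2 * π) : ℝ) : ℂ) * Complex.I ^ n with hC
      have hint : Integrable fun x : ℝ => ((gfun p x : ℝ) : ℂ) := (integrable_gfun p).ofReal
      have hxint : Integrable fun x : ℝ => x • ((gfun p x : ℝ) : ℂ) := by
        apply (integrable_gfun (Polynomial.X * p)).ofReal.congr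
        filter_upwards with x
        rw [gfun_X_mul]
        simp [Complex.real_smul]
      -- derivative identity via uniqueness
      have hT := hasDerivAt_T hint hxint y
      have hfun : (fun y : ℝ => ∫ x : ℝ, Complex.exp (Complex.I * x * y) * ((gfun p x : ℝ) : ℂ))
          = fun y : ℝ => C * ((gfun p y : ℝ) : ℂ) := by
        funext z
        rw [ih z, hC, mul_assoc]
      rw [hfun] at hT
      have hd : HasDerivAt (fun y : ℝ => C * ((gfun p y : ℝ) : ℂ))
          (C * ((gfun q y : ℝ) : ℂ)) y := (hasDerivAt_gc p y).const_mul C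
      have huniq : Complex.I * (∫ x : ℝ, Complex.exp (Complex.I * x * y) * ((x : ℂ) * ((gfun p x : ℝ) : ℂ)))
          = C * ((gfun q y : ℝ) : ℂ) := hT.unique hd
      have hA : (∫ x : ℝ, Complex.exp (Complex.I * x * y) * ((x : ℂ) * ((gfun p x : ℝ) : ℂ)))
          = -Complex.I * (C * ((gfun q y : ℝ) : ℂ)) := by
        calc (∫ x : ℝ, Complex.exp (Complex.I * x * y) * ((x : ℂ) * ((gfun p x : ℝ) : ℂ)))
            = -Complex.I * (Complex.I * ∫ x : ℝ,
                Complex.exp (Complex.I * x * y) * ((x : ℂ) * ((gfun p x : ℝ) : ℂ))) := by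
              rw [← mul_assoc, show -Complex.I * Complex.I = 1 by
                simp [Complex.I_mul_I], one_mul]
          _ = -Complex.I * (C * ((gfun q y : ℝ) : ℂ)) := by rw [huniq]
      -- Fourier of derivative
      have hdiff : Differentiable ℝ fun x : ℝ => ((gfun p x : ℝ) : ℂ) :=
        fun x => (hasDerivAt_gc p x).differentiableAt
      have hderiv_eq : deriv (fun x : ℝ => ((gfun p x : ℝ) : ℂ))
          = fun x => ((gfun q x : ℝ) : ℂ) := funext fun x => (hasDerivAt_gc p x).deriv
      have hint' : Integrable (deriv fun x : ℝ => ((gfun p x : ℝ) : ℂ)) := by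
        rw [hderiv_eq]; exact (integrable_gfun q).ofReal
      have hTd := T_deriv hint hdiff hint' y
      rw [hderiv_eq, ih y] at hTd
      simp only [] at hTd
      -- split the integrand
      have hsplit : ∀ x : ℝ, ((gfun (hermP (n+1)) x : ℝ) : ℂ)
          = (x : ℂ) * ((gfun p x : ℝ) : ℂ) - ((gfun q x : ℝ) : ℂ) := by
        intro x
        simp only [hp, hq, gfun, hermP, Polynomial.eval_sub, Polynomial.eval_mul,
          Polynomial.eval_ofNat, Polynomial.eval_X]
        push_cast
        ring
      have int1 : Integrable fun x : ℝ =>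
          Complex.exp (Complex.I * x * y) * ((x : ℂ) * ((gfun p x : ℝ) : ℂ)) := by
        apply integrable_kernel_mul _ y
        apply (integrable_gfun (Polynomial.X * p)).ofReal.congr
        filter_upwards with x
        rw [gfun_X_mul]
        exact Complex.ofReal_mul x _
      have int2 : Integrable fun x : ℝ =>
          Complex.exp (Complex.I * x * y) * ((gfun q x : ℝ) : ℂ) :=
        integrable_kernel_mul (integrable_gfun q).ofReal y
      have e1 : ∫ x : ℝ, Complex.exp (Complex.I * x * y) * ((gfun (hermP (n+1)) x : ℝ) : ℂ)
          = (∫ x : ℝ, Complex.exp (Complex.I * x * y) * ((x : ℂ) * ((gfun p x : ℝ) : ℂ)))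
            - ∫ x : ℝ, Complex.exp (Complex.I * x * y) * ((gfun q x : ℝ) : ℂ) := by
        rw [← integral_sub int1 int2]
        apply integral_congr_ae
        filter_upwards with x
        rw [hsplit x, mul_sub]
      rw [e1, hA, hTd, hsplit y]
      rw [hC]
      ring

lemma hermiteFun_eq (m : ℕ) (x : ℝ) :
    hermiteFun m x = ((2 : ℝ) ^ m * (Nat.factorial m : ℝ) * Real.sqrt Real.pi) ^ (-(1 : ℝ) / 2)
      * gfun (hermP m) x := by
  rw [hermiteFun, physHermite_eq, gfun, mul_assoc]

end

/-- The Hermite functions are eigenfunctions of the Fourier transform: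
`∫ e^{ixy} ψ_m(x) dx = √(2π)·iᵐ·ψ_m(y)`. -/
theorem stmt_11 (m : ℕ) (y : ℝ) :
    ∫ x : ℝ, Complex.exp (Complex.I * x * y) * ((hermiteFun m x : ℝ) : ℂ) =
      ((Real.sqrt (2 * Real.pi) : ℝ) : ℂ) * Complex.I ^ m * ((hermiteFun m y : ℝ) : ℂ) := by
  set c : ℝ := ((2 : ℝ) ^ m * (Nat.factorial m : ℝ) * Real.sqrt Real.pi) ^ (-(1 : ℝ) / 2) with hc
  have h1 : ∀ x : ℝ, Complex.exp (Complex.I * x * y) * ((hermiteFun m x : ℝ) : ℂ)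
      = (c : ℂ) * (Complex.exp (Complex.I * x * y) * ((gfun (hermP m) x : ℝ) : ℂ)) := by
    intro x
    rw [hermiteFun_eq, ← hc]
    push_cast
    ring
  simp_rw [h1]
  rw [MeasureTheory.integral_const_mul, key m y, hermiteFun_eq, ← hc]
  push_cast
  ring
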